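/- If A is Hurwitz and the pair (A, B) is controllable (the controllability matrix [B, AB, ..., A^{n-1}B] has full row rank), then the unique solution P of A P + P Aᵀ + B Bᵀ = 0 is positive definite. -/

import Mathlib

attribute [local instance] Matrix.linftyOpNormedRing Matrix.linftyOpNormedAlgebra

open MeasureTheory Matrix NormedSpace Filter Topology Nat

namespace Stmt7Aux

variable {n : ℕ}

lemma pow_mul_exp_tendsto (j : ℕ) {r : ℝ} (hr : r < 0) :
    Tendsto (fun t : ℝ => t ^ j * Real.exp (r * t)) atTop (𝓝 0) := by
  have hne : (-r) ≠ 0 := by linarith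
  have h1 : Tendsto (fun t : ℝ => (-r * t) ^ j * Real.exp (-(-r * t))) atTop (𝓝 0) :=
    (Real.tendsto_pow_mul_exp_neg_atTop_nhds_zero j).comp
      (Tendsto.const_mul_atTop (by linarith) tendsto_id)
  have h2 := h1.const_mul (((-r)⁻¹) ^ j)
  rw [mul_zero] at h2
  refine h2.congr fun t => ?_
  have e1 : -(-r * t) = r * t := by ring
  have e2 : (-r)⁻¹ ^ j * (-r * t) ^ j = t ^ j := by
    rw [← mul_pow, show (-r)⁻¹ * (-r * t) = t by
      rw [← mul_assoc, inv_mul_cancel₀ hne, one_mul]]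
  rw [e1, ← mul_assoc, e2]

lemma tendsto_exp_smul_mulVec (Ac : Matrix (Fin n) (Fin n) ℂ)
    (hA : ∀ z ∈ spectrum ℂ Ac, z.re < 0) (v : Fin n → ℂ) :
    Tendsto (fun t : ℝ => (NormedSpace.exp (t • Ac)) *ᵥ v) atTop (𝓝 0) := by
  set f : Module.End ℂ (Fin n → ℂ) := Matrix.toLinAlgEquiv' Ac with hf
  let V : Submodule ℂ (Fin n → ℂ) :=
    { carrier := {v | Tendsto (fun t : ℝ => (NormedSpace.exp (t • Ac)) *ᵥ v) atTop (𝓝 0)}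
      add_mem' := by
        intro a b ha hb
        simpa [Matrix.mulVec_add] using ha.add hb
      zero_mem' := by simpa [Matrix.mulVec_zero] using tendsto_const_nhds
      smul_mem' := by
        intro c a ha
        simpa [Matrix.mulVec_smul] using ha.const_smul c }
  suffices hV : V = ⊤ by
    have : v ∈ V := by rw [hV]; trivial
    exact this
  rw [eq_top_iff, ← Module.End.iSup_maxGenEigenspace_eq_top f]
  refine iSup_le fun μ => fun w hw => ?_
  rcases (Module.End.mem_maxGenEigenspace f μ w).mp hw with ⟨k, hk⟩
  rcases eq_or_ne w 0 with rfl | hw0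
  · exact Submodule.zero_mem V
  have hμ : μ.re < 0 := by
    apply hA
    rw [← AlgEquiv.spectrum_eq (Matrix.toLinAlgEquiv' (R := ℂ) (n := Fin n)) Ac]
    rw [← Module.End.hasEigenvalue_iff_mem_spectrum]
    exact Module.End.hasEigenvalue_of_hasGenEigenvalue (k := k)
      ((Submodule.ne_bot_iff _).mpr
        ⟨w, (Module.End.mem_genEigenspace_nat).mpr (LinearMap.mem_ker.mpr hk), hw0⟩)
  set N : Matrix (Fin n) (Fin n) ℂ := Ac - μ • 1 with hN
  have hNk : N ^ k *ᵥ w = 0 := by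
    have e0 : Matrix.toLinAlgEquiv' N = f - μ • 1 := by
      rw [hN, map_sub, _root_.map_smul, _root_.map_one, hf]
    have e : ((f - μ • (1 : Module.End ℂ (Fin n → ℂ))) ^ k) w = (N ^ k) *ᵥ w := by
      rw [← e0, ← map_pow, Matrix.toLinAlgEquiv'_apply]
    rw [← e, hk]
  have hNj : ∀ j, k ≤ j → N ^ j *ᵥ w = 0 := by
    intro j hj
    calc N ^ j *ᵥ w = (N ^ (j - k) * N ^ k) *ᵥ w := by
          rw [← pow_add, Nat.sub_add_cancel hj]
      _ = N ^ (j - k) *ᵥ (N ^ k *ᵥ w) := by rw [Matrix.mulVec_mulVec]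
      _ = 0 := by rw [hNk, Matrix.mulVec_zero]
  have key : ∀ t : ℝ, (NormedSpace.exp (t • Ac)) *ᵥ w
      = Complex.exp ((t : ℂ) * μ) •
          ∑ j ∈ Finset.range k, (((t : ℂ) ^ j * ((j ! : ℂ))⁻¹) • (N ^ j *ᵥ w)) := by
    intro t
    have hsplit : t • Ac = t • (μ • (1 : Matrix (Fin n) (Fin n) ℂ)) + t • N := by
      rw [← smul_add, hN, add_sub_cancel]
    have hcomm : Commute (t • (μ • (1 : Matrix (Fin n) (Fin n) ℂ))) (t • N) :=
      (((Commute.one_left N).smul_left μ).smul_left t).smul_right t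
    have h1 : NormedSpace.exp (t • (μ • (1 : Matrix (Fin n) (Fin n) ℂ)))
        = Complex.exp ((t : ℂ) * μ) • (1 : Matrix (Fin n) (Fin n) ℂ) := by
      have e1 : t • (μ • (1 : Matrix (Fin n) (Fin n) ℂ))
          = algebraMap ℂ (Matrix (Fin n) (Fin n) ℂ) ((t : ℂ) * μ) := by
        rw [← smul_assoc, Complex.real_smul, Algebra.algebraMap_eq_smul_one]
      rw [e1]
      refine (map_exp (algebraMap ℂ (Matrix (Fin n) (Fin n) ℂ))
        (continuous_algebraMap ℂ _) ((t : ℂ) * μ)).symm.trans ?_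
      rw [Algebra.algebraMap_eq_smul_one]
      congr 1
      rw [← Complex.exp_eq_exp_ℂ]
    have htN : t • N = ((t : ℂ)) • N := (algebraMap_smul ℂ t N).symm
    have h2 : NormedSpace.exp (t • N) *ᵥ w
        = ∑ j ∈ Finset.range k, (((t : ℂ) ^ j * ((j ! : ℂ))⁻¹) • (N ^ j *ᵥ w)) := by
      let L : Matrix (Fin n) (Fin n) ℂ →ₗ[ℂ] (Fin n → ℂ) :=
        { toFun := fun M => M *ᵥ w
          map_add' := fun M₁ M₂ => Matrix.add_mulVec _ _ _
          map_smul' := fun c M => by simp [Matrix.smul_mulVec] }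
      have hsumm : Summable (fun j : ℕ => ((j ! : ℂ))⁻¹ • ((t : ℂ) • N) ^ j) :=
        expSeries_summable' (𝕂 := ℂ) _
      have hmap := L.toContinuousLinearMap.map_tsum hsumm
      have : NormedSpace.exp (t • N) *ᵥ w = ∑' j : ℕ, ((j ! : ℂ))⁻¹ • (((t : ℂ) • N) ^ j *ᵥ w) := by
        rw [htN, NormedSpace.exp_eq_tsum ℂ]
        exact hmap.trans (by simp [L])
      rw [this]
      rw [tsum_eq_sum (s := Finset.range k) ?hvanish]
      case hvanish =>
        intro j hj
        rw [smul_pow, Matrix.smul_mulVec, hNj j (by simpa using hj),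
          smul_zero, smul_zero]
      refine Finset.sum_congr rfl fun j _ => ?_
      rw [smul_pow, Matrix.smul_mulVec, smul_smul, mul_comm]
    calc (NormedSpace.exp (t • Ac)) *ᵥ w
        = (NormedSpace.exp (t • (μ • (1 : Matrix (Fin n) (Fin n) ℂ))) * NormedSpace.exp (t • N)) *ᵥ w := by
          congr 1; rw [hsplit]; exact exp_add_of_commute hcomm
      _ = (Complex.exp ((t : ℂ) * μ) • (NormedSpace.exp (t • N))) *ᵥ w := by
          rw [h1, smul_mul_assoc, one_mul]
      _ = Complex.exp ((t : ℂ) * μ) • (NormedSpace.exp (t • N) *ᵥ w) := Matrix.smul_mulVec _ _ _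
      _ = _ := by rw [h2]
  -- final squeeze
  show Tendsto _ atTop (𝓝 0)
  have hbound : ∀ t : ℝ, 0 ≤ t → ‖(NormedSpace.exp (t • Ac)) *ᵥ w‖ ≤
      ∑ j ∈ Finset.range k, ((j ! : ℝ))⁻¹ * ‖N ^ j *ᵥ w‖ * (t ^ j * Real.exp (μ.re * t)) := by
    intro t ht
    rw [key t, norm_smul]
    have h1 : ‖Complex.exp ((t : ℂ) * μ)‖ = Real.exp (μ.re * t) := by
      rw [Complex.norm_exp]
      congr 1
      simp [Complex.mul_re]
      ring
    rw [h1]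
    calc Real.exp (μ.re * t) * ‖∑ j ∈ Finset.range k,
          (((t : ℂ) ^ j * ((j ! : ℂ))⁻¹) • (N ^ j *ᵥ w))‖
        ≤ Real.exp (μ.re * t) * ∑ j ∈ Finset.range k,
            ‖(((t : ℂ) ^ j * ((j ! : ℂ))⁻¹) • (N ^ j *ᵥ w))‖ := by
          gcongr
          exact norm_sum_le _ _
      _ = ∑ j ∈ Finset.range k,
            ((j ! : ℝ))⁻¹ * ‖N ^ j *ᵥ w‖ * (t ^ j * Real.exp (μ.re * t)) := by
          rw [Finset.mul_sum]
          refine Finset.sum_congr rfl fun j _ => ?_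
          rw [norm_smul, norm_mul, norm_pow, norm_inv]
          have : ‖(t : ℂ)‖ = t := by
            rw [Complex.norm_real, Real.norm_eq_abs, abs_of_nonneg ht]
          rw [this]
          have : ‖(j ! : ℂ)‖ = (j ! : ℝ) := by
            rw [show ((j ! : ℂ)) = ((j ! : ℝ) : ℂ) by push_cast; ring, Complex.norm_real,
              Real.norm_eq_abs, abs_of_nonneg (by positivity)]
          rw [this]
          ring
  have hg : Tendsto (fun t : ℝ => ∑ j ∈ Finset.range k,
      ((j ! : ℝ))⁻¹ * ‖N ^ j *ᵥ w‖ * (t ^ j * Real.exp (μ.re * t))) atTop (𝓝 0) := by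
    have : Tendsto (fun t : ℝ => ∑ j ∈ Finset.range k,
        ((j ! : ℝ))⁻¹ * ‖N ^ j *ᵥ w‖ * (t ^ j * Real.exp (μ.re * t))) atTop
        (𝓝 (∑ j ∈ Finset.range k, ((j ! : ℝ))⁻¹ * ‖N ^ j *ᵥ w‖ * 0)) := by
      refine tendsto_finset_sum _ fun j _ => ?_
      exact (pow_mul_exp_tendsto j hμ).const_mul _
    simpa using this
  refine squeeze_zero_norm' ?_ hg
  filter_upwards [eventually_ge_atTop (0 : ℝ)] with t ht
  exact hbound t ht

lemma map_exp_smul (A : Matrix (Fin n) (Fin n) ℝ) (t : ℝ) :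
    (NormedSpace.exp (t • A)).map (algebraMap ℝ ℂ) = NormedSpace.exp (t • A.map (algebraMap ℝ ℂ)) := by
  let L : Matrix (Fin n) (Fin n) ℝ →ₗ[ℝ] Matrix (Fin n) (Fin n) ℂ :=
    { toFun := fun M => M.map (algebraMap ℝ ℂ)
      map_add' := fun M₁ M₂ => by
        ext i j
        simp [Matrix.map_apply]
      map_smul' := fun c M => by
        ext i j
        simp [Matrix.map_apply] }
  have hcont : Continuous fun M : Matrix (Fin n) (Fin n) ℝ => M.map (algebraMap ℝ ℂ) :=
    L.continuous_of_finiteDimensional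
  have h := map_exp ((algebraMap ℝ ℂ).mapMatrix) hcont (t • A)
  rw [RingHom.mapMatrix_apply] at h
  refine h.trans ?_
  congr 1
  ext i j
  simp [Matrix.map_apply]

lemma tendsto_exp_entries (A : Matrix (Fin n) (Fin n) ℝ)
    (hA : ∀ z ∈ spectrum ℂ (A.map (algebraMap ℝ ℂ)), z.re < 0) (i j : Fin n) :
    Tendsto (fun t : ℝ => NormedSpace.exp (t • A) i j) atTop (𝓝 0) := by
  set Ac := A.map (algebraMap ℝ ℂ) with hAc
  have hvec := tendsto_exp_smul_mulVec Ac hA (Pi.single j 1)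
  have hn : Tendsto (fun t : ℝ => ‖NormedSpace.exp (t • Ac) *ᵥ Pi.single j 1‖) atTop (𝓝 0) := by
    have := hvec.norm
    rwa [norm_zero] at this
  refine squeeze_zero_norm' ?_ hn
  filter_upwards with t
  have hentry : ((NormedSpace.exp (t • A) i j : ℝ) : ℂ) = NormedSpace.exp (t • Ac) i j := by
    rw [← map_exp_smul A t]
    simp [Matrix.map_apply]
  have h1 : ‖NormedSpace.exp (t • A) i j‖ = ‖(NormedSpace.exp (t • Ac)) i j‖ := by
    rw [← hentry, Complex.norm_real]
  rw [h1]
  have h2 : (NormedSpace.exp (t • Ac)) i j = ((NormedSpace.exp (t • Ac)) *ᵥ Pi.single j 1) i := by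
    simp [Matrix.mulVec_single]
  rw [h2]
  exact norm_le_pi_norm (NormedSpace.exp (t • Ac) *ᵥ Pi.single j 1) i

end Stmt7Aux

open MeasureTheory Matrix NormedSpace in
/-- If `A` is Hurwitz and `(A, B)` is controllable (the controllability matrix
`[B, AB, …, A^{n-1}B]` has full row rank `n`), then the unique solution
`P = ∫₀^∞ e^{tA} B Bᵀ e^{tAᵀ} dt` of the Lyapunov equation `A P + P Aᵀ + B Bᵀ = 0`
is positive definite. -/
theorem stmt7 (n m : ℕ) (A : Matrix (Fin n) (Fin n) ℝ) (B : Matrix (Fin n) (Fin m) ℝ)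
    (hA : ∀ z ∈ spectrum ℂ (A.map (algebraMap ℝ ℂ)), z.re < 0)
    (hctrb : (Matrix.of fun i (p : Fin n × Fin m) => (A ^ (p.1 : ℕ) * B) i p.2 :
        Matrix (Fin n) (Fin n × Fin m) ℝ).rank = n)
    (P : Matrix (Fin n) (Fin n) ℝ)
    (hP : ∀ i j, P i j =
      ∫ t in Set.Ioi (0 : ℝ),
        (NormedSpace.exp (t • A) * B * Bᵀ * NormedSpace.exp (t • Aᵀ)) i j)
    (hLyap : A * P + P * Aᵀ + B * Bᵀ = 0) :
    P.PosDef := by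
  classical
  have hET : ∀ t : ℝ, NormedSpace.exp (t • Aᵀ) = (NormedSpace.exp (t • A))ᵀ := fun t => by
    rw [← Matrix.transpose_smul, Matrix.exp_transpose]
  -- Hermitian part
  have hherm : P.IsHermitian := by
    refine Matrix.ext fun i j => ?_
    rw [Matrix.conjTranspose_apply, star_trivial]
    rw [hP i j, hP j i]
    refine congrArg (fun f : ℝ → ℝ => ∫ t in Set.Ioi (0:ℝ), f t) (funext fun t => ?_)
    rw [hET t]
    have e : NormedSpace.exp (t • A) * B * Bᵀ * (NormedSpace.exp (t • A))ᵀ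
        = (NormedSpace.exp (t • A) * B) * (NormedSpace.exp (t • A) * B)ᵀ := by
      rw [Matrix.transpose_mul, Matrix.mul_assoc]
    rw [e]
    simp [Matrix.mul_apply, Matrix.transpose_apply, mul_comm]
  refine Matrix.PosDef.of_dotProduct_mulVec_pos hherm fun x hx => ?_
  have hstar : star x = x := funext fun i => star_trivial _
  rw [hstar]
  -- setup
  set E : ℝ → Matrix (Fin n) (Fin n) ℝ := fun t => NormedSpace.exp (t • A) with hE
  set E2 : ℝ → Matrix (Fin n) (Fin n) ℝ := fun t => NormedSpace.exp (t • Aᵀ) with hE2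
  have hEd : ∀ t, HasDerivAt E (A * E t) t := fun t => hasDerivAt_exp_smul_const' A t
  have hE2d : ∀ t, HasDerivAt E2 (Aᵀ * E2 t) t := fun t => hasDerivAt_exp_smul_const' Aᵀ t
  have hE0 : E 0 = 1 := by rw [hE]; simp
  have hE20 : E2 0 = 1 := by rw [hE2]; simp
  have hAE : ∀ t, A * E t = E t * A := fun t =>
    (((Commute.refl A).smul_right t).exp_right).eq
  have hAE2 : ∀ t, Aᵀ * E2 t = E2 t * Aᵀ := fun t =>
    (((Commute.refl Aᵀ).smul_right t).exp_right).eq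
  set U : ℝ → Matrix (Fin n) (Fin n) ℝ := fun t => E t * P * E2 t with hU
  -- the quadratic functional
  let Φ : Matrix (Fin n) (Fin n) ℝ →L[ℝ] ℝ :=
    LinearMap.toContinuousLinearMap
      { toFun := fun M => x ⬝ᵥ (M *ᵥ x)
        map_add' := fun M₁ M₂ => by
          simp [Matrix.add_mulVec, dotProduct_add]
        map_smul' := fun c M => by
          simp [Matrix.smul_mulVec, dotProduct_smul] }
  have hΦ : ∀ M, Φ M = x ⬝ᵥ (M *ᵥ x) := fun M =>
    congrFun (LinearMap.coe_toContinuousLinearMap' _) M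
  set h : ℝ → ℝ := fun t => Φ (U t) with hh
  set q : ℝ → ℝ := fun t => Φ (E t * (B * Bᵀ) * E2 t) with hq
  have hL : A * P + P * Aᵀ = -(B * Bᵀ) := eq_neg_of_add_eq_zero_left hLyap
  have hUd : ∀ t, HasDerivAt U (A * U t + U t * Aᵀ) t := by
    intro t
    have h1 := ((hEd t).mul_const P).mul (hE2d t)
    have e : A * U t + U t * Aᵀ = A * E t * P * E2 t + E t * P * (Aᵀ * E2 t) := by
      show A * (E t * P * E2 t) + (E t * P * E2 t) * Aᵀ = _
      rw [show (E t * P * E2 t) * Aᵀ = (E t * P) * (E2 t * Aᵀ) by noncomm_ring, ← hAE2 t]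
      noncomm_ring
    rw [e]
    exact h1
  have hhd : ∀ t, HasDerivAt h (-(q t)) t := by
    intro t
    have h1 := Φ.hasFDerivAt.comp_hasDerivAt t (hUd t)
    have e : Φ (A * U t + U t * Aᵀ) = -(q t) := by
      have key : A * U t + U t * Aᵀ = -(E t * (B * Bᵀ) * E2 t) := by
        have h2 : A * U t + U t * Aᵀ = E t * (A * P + P * Aᵀ) * E2 t := by
          show A * (E t * P * E2 t) + (E t * P * E2 t) * Aᵀ = _
          rw [show A * (E t * P * E2 t) = (A * E t) * (P * E2 t) by noncomm_ring, hAE t,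
            show (E t * P * E2 t) * Aᵀ = (E t * P) * (E2 t * Aᵀ) by noncomm_ring, ← hAE2 t]
          noncomm_ring
        rw [h2, hL, Matrix.mul_neg, Matrix.neg_mul]
      rw [key, map_neg]
    rw [← e]
    exact h1
  have hET2 : ∀ t, E2 t = (E t)ᵀ := fun t => hET t
  have hqw : ∀ t, q t = (Matrix.vecMul x (E t * B)) ⬝ᵥ (Matrix.vecMul x (E t * B)) := by
    intro t
    show Φ (E t * (B * Bᵀ) * E2 t) = _
    rw [hΦ, hET2 t]
    rw [show E t * (B * Bᵀ) * (E t)ᵀ = (E t * B) * (E t * B)ᵀ by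
      rw [← Matrix.mul_assoc, Matrix.mul_assoc (E t * B) Bᵀ ((E t)ᵀ), ← Matrix.transpose_mul]]
    rw [← Matrix.mulVec_mulVec, Matrix.dotProduct_mulVec, Matrix.mulVec_transpose]
  have hq0 : ∀ t, 0 ≤ q t := by
    intro t
    rw [hqw t]
    exact Finset.sum_nonneg fun p _ => mul_self_nonneg _
  have hqc : Continuous q := by
    refine continuous_iff_continuousAt.mpr fun t => ?_
    have hV : HasDerivAt (fun s => E s * (B * Bᵀ) * E2 s)
        ((A * E t) * (B * Bᵀ) * E2 t + (E t * (B * Bᵀ)) * (Aᵀ * E2 t)) t :=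
      ((hEd t).mul_const (B * Bᵀ)).mul (hE2d t)
    exact (Φ.continuous.continuousAt).comp hV.continuousAt
  set K : ℝ → ℝ := fun T => ∫ s in (0:ℝ)..T, q s with hK
  have hKval : ∀ T, K T = h 0 - h T := by
    intro T
    have hint : IntervalIntegrable (fun s => -(q s)) volume 0 T :=
      (hqc.neg).intervalIntegrable 0 T
    have := intervalIntegral.integral_eq_sub_of_hasDerivAt (fun t _ => hhd t) hint
    rw [intervalIntegral.integral_neg] at this
    show (∫ s in (0:ℝ)..T, q s) = h 0 - h T
    linarith [this]
  -- h tends to 0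
  have hu : ∀ p, Tendsto (fun t => Matrix.vecMul x (E t) p) atTop (𝓝 0) := by
    intro p
    have : ∀ t, Matrix.vecMul x (E t) p = ∑ i, x i * E t i p := by
      intro t
      simp [Matrix.vecMul, dotProduct]
    simp_rw [this]
    have := tendsto_finset_sum (Finset.univ : Finset (Fin n))
      (fun i _ => (Stmt7Aux.tendsto_exp_entries A hA i p).const_mul (x i))
    simpa using this
  have hhtend : Tendsto h atTop (𝓝 0) := by
    have hexp : ∀ t, h t = ∑ p, ∑ r, Matrix.vecMul x (E t) p * (P p r * Matrix.vecMul x (E t) r) := by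
      intro t
      show Φ (E t * P * E2 t) = _
      rw [hΦ, hET2 t]
      rw [← Matrix.mulVec_mulVec, ← Matrix.mulVec_mulVec, Matrix.dotProduct_mulVec,
        Matrix.mulVec_transpose]
      simp [dotProduct, Matrix.mulVec, Finset.mul_sum]
    have hsum := tendsto_finset_sum (Finset.univ : Finset (Fin n)) fun p (_ : p ∈ Finset.univ) =>
      tendsto_finset_sum (Finset.univ : Finset (Fin n)) fun r (_ : r ∈ Finset.univ) =>
        (hu p).mul ((hu r).const_mul (P p r))
    have hsum0 : Tendsto (fun t => ∑ p, ∑ r,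
        Matrix.vecMul x (E t) p * (P p r * Matrix.vecMul x (E t) r)) atTop (𝓝 0) := by
      simpa using hsum
    exact Tendsto.congr (fun t => (hexp t).symm) hsum0
  have hval : h 0 = x ⬝ᵥ (P *ᵥ x) := by
    show Φ (E 0 * P * E2 0) = _
    rw [hE0, hE20, Matrix.one_mul, Matrix.mul_one, hΦ]
  have hKlim : Tendsto K atTop (𝓝 (h 0)) := by
    have : K = fun T => h 0 - h T := funext hKval
    rw [this]
    simpa using tendsto_const_nhds.sub hhtend
  have hpos0 : 0 ≤ h 0 := by
    refine ge_of_tendsto hKlim ?_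
    filter_upwards [eventually_ge_atTop (0:ℝ)] with T hT
    exact intervalIntegral.integral_nonneg hT fun u _ => hq0 u
  -- it suffices to show h 0 ≠ 0
  rw [← hval]
  rcases hpos0.lt_or_eq with hlt | heq
  · exact hlt
  exfalso
  have hzero : h 0 = 0 := heq.symm
  -- K is monotone and tends to 0, hence K T = 0 for T ≥ 0, hence h T = 0 for T ≥ 0
  have hKmono : Monotone K := by
    intro T1 T2 hT
    have hadd := intervalIntegral.integral_add_adjacent_intervals
      (hqc.intervalIntegrable (μ := volume) 0 T1) (hqc.intervalIntegrable (μ := volume) T1 T2)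
    have hmid : 0 ≤ ∫ s in T1..T2, q s := intervalIntegral.integral_nonneg hT fun u _ => hq0 u
    show (∫ s in (0:ℝ)..T1, q s) ≤ (∫ s in (0:ℝ)..T2, q s)
    linarith [hadd]
  have hKzero : ∀ T, 0 ≤ T → K T = 0 := by
    intro T hT
    refine le_antisymm ?_ (intervalIntegral.integral_nonneg hT fun u _ => hq0 u)
    have := hKmono.ge_of_tendsto (hzero ▸ hKlim) T
    exact this
  have hhzero : ∀ T, 0 ≤ T → h T = 0 := by
    intro T hT
    have := hKval T
    rw [hKzero T hT, hzero] at this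
    linarith
  -- q vanishes on (0, ∞)
  have hqzero : ∀ t : ℝ, 0 < t → q t = 0 := by
    intro t ht
    have hloc : (fun _ : ℝ => (0:ℝ)) =ᶠ[𝓝 t] h := by
      filter_upwards [isOpen_Ioi.mem_nhds ht] with s hs
      exact (hhzero s (le_of_lt hs)).symm
    have hd0 : HasDerivAt (fun _ : ℝ => (0:ℝ)) (-(q t)) t :=
      (hhd t).congr_of_eventuallyEq hloc
    have := hd0.unique (hasDerivAt_const t 0)
    linarith
  -- vecMul x (E t * B) vanishes for t > 0
  have hw : ∀ t : ℝ, 0 < t → Matrix.vecMul x (E t * B) = 0 := by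
    intro t ht
    have := hqzero t ht
    rw [hqw t] at this
    exact dotProduct_self_eq_zero.mp this
  -- the chain of derivatives
  have hchain : ∀ k : ℕ, ∀ t : ℝ, 0 < t → Matrix.vecMul x (A ^ k * E t * B) = 0 := by
    intro k
    induction k with
    | zero =>
      intro t ht
      rw [pow_zero, Matrix.one_mul]
      exact hw t ht
    | succ k ih =>
      intro t ht
      funext p
      let Ψ : Matrix (Fin n) (Fin n) ℝ →L[ℝ] ℝ :=
        LinearMap.toContinuousLinearMap
          { toFun := fun M => Matrix.vecMul x (A ^ k * M * B) p
            map_add' := fun M₁ M₂ => by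
              simp [Matrix.mul_add, Matrix.add_mul, Matrix.vecMul_add]
            map_smul' := fun c M => by
              simp [Matrix.mul_smul, Matrix.smul_mul, Matrix.vecMul, dotProduct,
                Finset.mul_sum, mul_left_comm] }
      have hΨ : ∀ M, Ψ M = Matrix.vecMul x (A ^ k * M * B) p := fun M =>
        congrFun (LinearMap.coe_toContinuousLinearMap' _) M
      have hder : HasDerivAt (fun s => Ψ (E s)) (Ψ (A * E t)) t :=
        Ψ.hasFDerivAt.comp_hasDerivAt t (hEd t)
      have hloc : (fun _ : ℝ => (0:ℝ)) =ᶠ[𝓝 t] (fun s => Ψ (E s)) := by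
        filter_upwards [isOpen_Ioi.mem_nhds ht] with s hs
        rw [hΨ, ih s hs]
        rfl
      have hd0 : HasDerivAt (fun _ : ℝ => (0:ℝ)) (Ψ (A * E t)) t :=
        hder.congr_of_eventuallyEq hloc
      have hzero' : Ψ (A * E t) = 0 := (hd0.unique (hasDerivAt_const t 0))
      have : Matrix.vecMul x (A ^ (k+1) * E t * B) p
          = Ψ (A * E t) := by
        rw [hΨ]
        congr 2
        rw [pow_succ, Matrix.mul_assoc (A ^ k) A (E t)]
      rw [show (0 : Fin m → ℝ) p = 0 from rfl, this, hzero']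
  -- take limits t → 0⁺
  have hxAB : ∀ k : ℕ, Matrix.vecMul x (A ^ k * B) = 0 := by
    intro k
    funext p
    let g : ℝ → ℝ := fun s => Matrix.vecMul x (A ^ k * E s * B) p
    have hgc : ContinuousAt g 0 := by
      let Ψ : Matrix (Fin n) (Fin n) ℝ →L[ℝ] ℝ :=
        LinearMap.toContinuousLinearMap
          { toFun := fun M => Matrix.vecMul x (A ^ k * M * B) p
            map_add' := fun M₁ M₂ => by
              simp [Matrix.mul_add, Matrix.add_mul, Matrix.vecMul_add]
            map_smul' := fun c M => by
              simp [Matrix.mul_smul, Matrix.smul_mul, Matrix.vecMul, dotProduct,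
                Finset.mul_sum, mul_left_comm] }
      exact (Ψ.hasFDerivAt.comp_hasDerivAt 0 (hEd 0)).continuousAt
    have h1 : Tendsto g (𝓝[>] (0:ℝ)) (𝓝 (g 0)) :=
      (hgc.tendsto).mono_left nhdsWithin_le_nhds
    have h2 : Tendsto g (𝓝[>] (0:ℝ)) (𝓝 0) := by
      refine Tendsto.congr' ?_ tendsto_const_nhds
      filter_upwards [self_mem_nhdsWithin] with s hs
      exact (congrFun (hchain k s hs) p).symm
    have := tendsto_nhds_unique h1 h2
    have hg0 : g 0 = Matrix.vecMul x (A ^ k * B) p := by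
      show Matrix.vecMul x (A ^ k * E 0 * B) p = _
      rw [hE0, Matrix.mul_one]
    rw [← hg0, this]
    rfl
  -- contradiction with controllability
  set C : Matrix (Fin n) (Fin n × Fin m) ℝ :=
    Matrix.of fun i (p : Fin n × Fin m) => (A ^ (p.1 : ℕ) * B) i p.2 with hC
  have hxC : Matrix.vecMul x C = 0 := by
    funext p
    have := congrFun (hxAB p.1) p.2
    simpa [Matrix.vecMul, dotProduct, hC] using this
  have hrange : LinearMap.range C.mulVecLin = ⊤ := by
    apply Submodule.eq_top_of_finrank_eq
    have : Module.finrank ℝ (LinearMap.range C.mulVecLin) = C.rank := rfl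
    rw [this, hctrb, Module.finrank_fin_fun]
  obtain ⟨z, hz⟩ : ∃ z, C *ᵥ z = x := by
    have := LinearMap.range_eq_top.mp hrange x
    obtain ⟨z, hz⟩ := this
    exact ⟨z, hz⟩
  have hxx : x ⬝ᵥ x = 0 := by
    nth_rewrite 2 [← hz]
    rw [Matrix.dotProduct_mulVec, hxC, zero_dotProduct]
  exact hx (dotProduct_self_eq_zero.mp hxx)
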